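/- Define, for real κ ≥ 2 and ζ > 0, Υ_{κ,ζ} := sup over monic irreducible integer polynomials p with all roots in [-κ,κ] and over closed intervals I ⊆ [-κ,κ] of length ζ, of the quantity (|{θ ∈ I : p(θ) = 0}| - 1)/deg(p). Then lim_{ζ → 0⁺} Υ_{κ,ζ} = 0. -/

import Mathlib

open Polynomial


lemma two_mul_card_lt_pairs {α : Type*} [LinearOrder α] [DecidableEq α] (T : Finset α) :
    2 * ((T ×ˢ T).filter (fun y : α × α => y.1 < y.2)).card = T.card * T.card - T.card := by
  classical
  have hsplit : T.offDiag = (T ×ˢ T).filter (fun y : α × α => y.1 < y.2)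
      ∪ (T ×ˢ T).filter (fun y : α × α => y.2 < y.1) := by
    ext ⟨a, b⟩
    simp only [Finset.mem_offDiag, Finset.mem_union, Finset.mem_filter, Finset.mem_product]
    constructor
    · rintro ⟨ha, hb, hne⟩
      rcases lt_or_gt_of_ne hne with h | h
      · exact Or.inl ⟨⟨ha, hb⟩, h⟩
      · exact Or.inr ⟨⟨ha, hb⟩, h⟩
    · rintro (⟨⟨ha, hb⟩, h⟩ | ⟨⟨ha, hb⟩, h⟩)
      · exact ⟨ha, hb, ne_of_lt h⟩
      · exact ⟨ha, hb, (ne_of_lt h).symm⟩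
  have hdisj : Disjoint ((T ×ˢ T).filter (fun y : α × α => y.1 < y.2))
      ((T ×ˢ T).filter (fun y : α × α => y.2 < y.1)) := by
    rw [Finset.disjoint_left]
    intro y h1 h2
    rw [Finset.mem_filter] at h1 h2
    exact absurd h2.2 (not_lt_of_gt h1.2)
  have hswap : ((T ×ˢ T).filter (fun y : α × α => y.2 < y.1)).card
      = ((T ×ˢ T).filter (fun y : α × α => y.1 < y.2)).card := by
    apply Finset.card_bij' (fun y _ => (y.2, y.1)) (fun y _ => (y.2, y.1)) <;>
      simp +contextual [Finset.mem_filter, Finset.mem_product, and_comm]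
  have hoff := Finset.offDiag_card T
  rw [hsplit, Finset.card_union_of_disjoint hdisj, hswap] at hoff
  omega

set_option maxHeartbeats 2000000 in
lemma key_bound (κ ζ : ℝ) (hκ : 2 ≤ κ) (hζ0 : 0 < ζ) (hζ1 : ζ < 1)
    (p : Polynomial ℤ) (hm : p.Monic) (hirr : Irreducible p) (a : ℝ)
    (hroots : ∀ z ∈ (p.map (Int.castRingHom ℂ)).roots, z.im = 0 ∧ -κ ≤ z.re ∧ z.re ≤ κ) :
    ((((p.map (Int.castRingHom ℝ)).roots.filter
          (fun x => a ≤ x ∧ x ≤ a + ζ)).card : ℝ) - 1) / (p.natDegree : ℝ)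
      ≤ Real.sqrt (2 * Real.log (2 * κ) / Real.log ζ⁻¹) := by
  classical
  set q : Polynomial ℚ := p.map (Int.castRingHom ℚ) with hq
  have hqm : q.Monic := hm.map _
  have hq0 : q ≠ 0 := hqm.ne_zero
  have hqirr : Irreducible q :=
    (Polynomial.IsPrimitive.Int.irreducible_iff_irreducible_map_cast hm.isPrimitive).mp hirr
  haveI : Fact (Irreducible q) := ⟨hqirr⟩
  set K := AdjoinRoot q with hK
  let pb : PowerBasis ℚ K := AdjoinRoot.powerBasis hq0
  haveI : Module.Finite ℚ K := pb.finite
  letI : Fintype (K →ₐ[ℚ] ℂ) := PowerBasis.AlgHom.fintype pb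
  have hminpoly : minpoly ℚ pb.gen = q := AdjoinRoot.minpoly_powerBasis_gen_of_monic hqm
  have hcard : Fintype.card (K →ₐ[ℚ] ℂ) = pb.dim :=
    AlgHom.card_of_powerBasis pb (by rw [IsSeparable, hminpoly]; exact hqirr.separable)
      (by rw [hminpoly]; exact IsAlgClosed.splits _)
  set N := pb.dim with hN
  let e : Fin N ≃ (K →ₐ[ℚ] ℂ) :=
    Fintype.equivOfCardEq (by rw [Fintype.card_fin, hcard, hN])
  set f : Fin N → ℂ := fun i => e i pb.gen with hf
  -- gen is integral over ℤ
  have haq : (Polynomial.aeval pb.gen) q = 0 := by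
    rw [AdjoinRoot.powerBasis_gen, Polynomial.aeval_def]
    exact AdjoinRoot.eval₂_root q
  have hgen : IsIntegral ℤ pb.gen := by
    refine ⟨p, hm, ?_⟩
    rw [← Polynomial.aeval_def, ← Polynomial.aeval_map_algebraMap ℚ, algebraMap_int_eq, ← hq, haq]
  have hdint : IsIntegral ℤ (Algebra.discr ℚ (pb.basis : Fin pb.dim → K)) := by
    refine Algebra.discr_isIntegral ℚ (fun i => ?_)
    rw [PowerBasis.coe_basis]
    exact hgen.pow _
  have hd0 : Algebra.discr ℚ (pb.basis : Fin pb.dim → K) ≠ 0 :=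
    Algebra.discr_not_zero_of_basis ℚ pb.basis
  obtain ⟨z, hz⟩ := IsIntegrallyClosed.isIntegral_iff.mp hdint
  have hz0 : z ≠ 0 := by rintro rfl; rw [map_zero] at hz; exact hd0 hz.symm
  have h1 : (1:ℝ) ≤ ‖(algebraMap ℚ ℂ (Algebra.discr ℚ (pb.basis : Fin pb.dim → K)))‖ := by
    rw [← hz]
    have : (algebraMap ℚ ℂ) ((algebraMap ℤ ℚ) z) = (z : ℂ) := by push_cast; simp
    rw [this, Complex.norm_intCast]
    exact_mod_cast Int.one_le_abs hz0
  have hprod := Algebra.discr_powerBasis_eq_prod ℚ ℂ pb e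
  set pc := p.map (Int.castRingHom ℂ) with hpcdef
  have hpc : pc = q.map (algebraMap ℚ ℂ) := by
    rw [hpcdef, hq, Polynomial.map_map]
    congr 1
  have hpcm : pc.Monic := hm.map _
  have hpc0 : pc ≠ 0 := hpcm.ne_zero
  have hfr : ∀ i, f i ∈ pc.roots := by
    intro i
    rw [hpc, Polynomial.mem_roots (by rw [← hpc]; exact hpc0)]
    show Polynomial.IsRoot _ (e i pb.gen)
    rw [Polynomial.IsRoot, Polynomial.eval_map, ← Polynomial.aeval_def,
      Polynomial.aeval_algHom_apply, haq, map_zero]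
  have hinj : Function.Injective f := by
    intro i j h
    apply e.injective
    apply AdjoinRoot.algHom_ext
    rw [← AdjoinRoot.powerBasis_gen hq0]
    exact h
  have hsep : pc.Separable := by rw [hpc]; exact hqirr.separable.map
  have hnodup : pc.roots.Nodup := Polynomial.nodup_roots hsep
  have hnq : q.natDegree = p.natDegree := hm.natDegree_map _
  have hn : p.natDegree = N := by rw [hN]; show _ = q.natDegree; rw [hnq]
  have hrootscard : Multiset.card pc.roots = N := by
    rw [Polynomial.splits_iff_card_roots.mp (IsAlgClosed.splits pc), ← hn, hpcdef]
    exact hm.natDegree_map _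
  set F := pc.roots.toFinset with hF
  have hFcard : F.card = N := by
    rw [hF, Multiset.toFinset_card_of_nodup hnodup, hrootscard]
  have himage : Finset.image f Finset.univ = F := by
    apply Finset.eq_of_subset_of_card_le
    · intro x hx
      obtain ⟨i, _, rfl⟩ := Finset.mem_image.mp hx
      exact Multiset.mem_toFinset.mpr (hfr i)
    · rw [hFcard, Finset.card_image_of_injective _ hinj, Finset.card_univ, Fintype.card_fin]
  set T := Finset.univ.filter (fun i => a ≤ (f i).re ∧ (f i).re ≤ a + ζ) with hT
  set t := T.card with ht
  -- the real-root count is at most t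
  have htR : (((p.map (Int.castRingHom ℝ)).roots.filter
          (fun x => a ≤ x ∧ x ≤ a + ζ)).card : ℝ) ≤ (t : ℝ) := by
    have hmapcomp : pc = (p.map (Int.castRingHom ℝ)).map (Complex.ofRealHom) := by
      rw [hpcdef, Polynomial.map_map]
      congr 1
    have hle : ((p.map (Int.castRingHom ℝ)).roots).map (Complex.ofRealHom : ℝ →+* ℂ)
        ≤ pc.roots := by
      rw [hmapcomp]
      exact Polynomial.map_roots_le (by rw [← hmapcomp]; exact hpc0)
    have hfil : (((p.map (Int.castRingHom ℝ)).roots.filter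
          (fun x => a ≤ x ∧ x ≤ a + ζ)).map (Complex.ofRealHom : ℝ →+* ℂ))
        ≤ pc.roots.filter (fun z => a ≤ z.re ∧ z.re ≤ a + ζ) := by
      have := Multiset.filter_le_filter (fun z : ℂ => a ≤ z.re ∧ z.re ≤ a + ζ) hle
      rw [Multiset.filter_map] at this
      refine le_trans (le_of_eq ?_) this
      congr 1
    have hcardle := Multiset.card_le_card hfil
    rw [Multiset.card_map] at hcardle
    have hfin : Multiset.card (pc.roots.filter (fun z => a ≤ z.re ∧ z.re ≤ a + ζ)) = t := by
      rw [← Multiset.toFinset_card_of_nodup (Multiset.Nodup.filter _ hnodup),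
        Multiset.toFinset_filter, ← hF, ← himage, Finset.filter_image,
        Finset.card_image_of_injective _ hinj, ht]
    exact_mod_cast hfin ▸ hcardle
  have him : ∀ i : Fin N, (f i).im = 0 := fun i => (hroots _ (hfr i)).1
  have hrange : ∀ i : Fin N, -κ ≤ (f i).re ∧ (f i).re ≤ κ :=
    fun i => (hroots _ (hfr i)).2
  have habs : ∀ i j : Fin N, ‖(f j - f i)‖ = |(f j).re - (f i).re| := by
    intro i j
    have hsub : f j - f i = (((f j).re - (f i).re : ℝ) : ℂ) := by
      apply Complex.ext
      · simp
      · simp [him i, him j]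
    rw [hsub, Complex.norm_real, Real.norm_eq_abs]
  have hboundpair : ∀ i j : Fin N,
      ‖(f j - f i)‖ ≤ (if i ∈ T ∧ j ∈ T then ζ else 2 * κ) := by
    intro i j
    rw [habs]
    split_ifs with h
    · obtain ⟨hi, hj⟩ := h
      rw [hT, Finset.mem_filter] at hi hj
      rw [abs_le]
      constructor <;> linarith [hi.2.1, hi.2.2, hj.2.1, hj.2.2]
    · have h1' := hrange i; have h2' := hrange j
      rw [abs_le]
      constructor <;> linarith [h1'.1, h1'.2, h2'.1, h2'.2]
  have hfe : ∀ i, f i = e i pb.gen := fun i => rfl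
  have hprodabs : (1:ℝ) ≤ ∏ i : Fin N, ∏ j ∈ Finset.Ioi i,
      (if i ∈ T ∧ j ∈ T then ζ else 2 * κ) ^ 2 := by
    have step : ‖((algebraMap ℚ ℂ) (Algebra.discr ℚ ⇑pb.basis))‖
        = ∏ i : Fin N, ∏ j ∈ Finset.Ioi i, ‖(f j - f i)‖ ^ 2 := by
      rw [hprod]
      simp only [norm_prod, norm_pow, ← hfe]
      exact Finset.prod_congr rfl fun i _ => Finset.prod_congr (by ext; simp) fun j _ => rfl
    refine le_trans (le_trans h1 (le_of_eq step)) ?_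
    apply Finset.prod_le_prod
    · intro i _
      apply Finset.prod_nonneg
      intro j _
      positivity
    · intro i _
      apply Finset.prod_le_prod
      · intro j _
        positivity
      · intro j _
        have hle2κ : (0:ℝ) ≤ ‖(f j - f i)‖ := norm_nonneg _
        exact pow_le_pow_left₀ hle2κ (hboundpair i j) 2
  set S := (Finset.univ : Finset (Fin N)).sigma (fun i => Finset.Ioi i) with hS
  set c := (S.filter (fun x : Σ _ : Fin N, Fin N => x.1 ∈ T ∧ x.2 ∈ T)).card with hc
  set m := (S.filter (fun x : Σ _ : Fin N, Fin N => ¬(x.1 ∈ T ∧ x.2 ∈ T))).card with hmm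
  have hprodite : (∏ i : Fin N, ∏ j ∈ Finset.Ioi i, (if i ∈ T ∧ j ∈ T then ζ else 2 * κ) ^ 2)
      = (ζ ^ 2) ^ c * ((2 * κ) ^ 2) ^ m := by
    have : (∏ i : Fin N, ∏ j ∈ Finset.Ioi i, (if i ∈ T ∧ j ∈ T then ζ else 2 * κ) ^ 2)
        = ∏ x ∈ S, (if x.1 ∈ T ∧ x.2 ∈ T then ζ ^ 2 else (2 * κ) ^ 2) := by
      rw [hS, Finset.prod_sigma]
      refine Finset.prod_congr rfl fun i _ => Finset.prod_congr rfl fun j _ => ?_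
      rw [apply_ite (fun y : ℝ => y ^ 2)]
    rw [this, Finset.prod_ite, Finset.prod_const, Finset.prod_const, hc, hmm]
  have hc2 : 2 * c = t * t - t := by
    have hbij : c = ((T ×ˢ T).filter (fun y : Fin N × Fin N => y.1 < y.2)).card := by
      rw [hc]
      apply Finset.card_bij (fun x _ => ((x.1, x.2) : Fin N × Fin N))
      · rintro ⟨i, j⟩ hx
        rw [Finset.mem_filter, hS, Finset.mem_sigma] at hx
        rw [Finset.mem_filter, Finset.mem_product]
        exact ⟨⟨hx.2.1, hx.2.2⟩, Finset.mem_Ioi.mp hx.1.2⟩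
      · rintro ⟨i, j⟩ h1 ⟨i', j'⟩ h2 heq
        injection heq with h3 h4
        subst h3; subst h4; rfl
      · rintro ⟨i, j⟩ hy
        rw [Finset.mem_filter, Finset.mem_product] at hy
        refine ⟨⟨i, j⟩, ?_, rfl⟩
        rw [Finset.mem_filter, hS, Finset.mem_sigma]
        exact ⟨⟨Finset.mem_univ _, Finset.mem_Ioi.mpr hy.2⟩, hy.1.1, hy.1.2⟩
    rw [hbij, two_mul_card_lt_pairs, ht]
  have hmN : m ≤ N * N := by
    calc m ≤ S.card := Finset.card_filter_le _ _
      _ ≤ Fintype.card (Σ _ : Fin N, Fin N) := Finset.card_le_univ _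
      _ = N * N := by simp
  -- numeric phase
  have h2κ : (1:ℝ) ≤ 2 * κ := by linarith
  have hkey : (1:ℝ) ≤ ζ ^ (t * t - t) * (2 * κ) ^ (2 * (N * N)) := by
    have e1 : (ζ ^ 2) ^ c = ζ ^ (t * t - t) := by
      rw [← pow_mul, hc2]
    have e2 : ((2 * κ) ^ 2) ^ m ≤ (2 * κ) ^ (2 * (N * N)) := by
      rw [← pow_mul]
      exact pow_le_pow_right₀ h2κ (by omega)
    calc (1:ℝ) ≤ (ζ ^ 2) ^ c * ((2 * κ) ^ 2) ^ m := by rw [← hprodite]; exact hprodabs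
      _ ≤ ζ ^ (t * t - t) * (2 * κ) ^ (2 * (N * N)) := by
          rw [e1]
          apply mul_le_mul_of_nonneg_left e2 (by positivity)
  -- numeric endgame
  have hNpos : 0 < N := pb.dim_pos
  have hn' : (p.natDegree : ℝ) = (N : ℝ) := by exact_mod_cast congrArg Nat.cast hn
  have hL : 0 < Real.log (2 * κ) := Real.log_pos (by linarith)
  have hinv : 1 < ζ⁻¹ := (one_lt_inv₀ hζ0).mpr hζ1
  have hl : 0 < Real.log ζ⁻¹ := Real.log_pos hinv
  have htt : t ≤ t * t := by
    rcases Nat.eq_zero_or_pos t with h | h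
    · simp [h]
    · exact Nat.le_mul_of_pos_left t h
  have hlogkey : ((t : ℝ) * t - t) * Real.log ζ⁻¹ ≤ 2 * (N : ℝ) ^ 2 * Real.log (2 * κ) := by
    have hlog := Real.log_le_log (by norm_num) hkey
    rw [Real.log_one, Real.log_mul (by positivity) (by positivity),
      Real.log_pow, Real.log_pow] at hlog
    have hzinv : Real.log ζ = -Real.log ζ⁻¹ := by rw [Real.log_inv]; ring
    rw [hzinv] at hlog
    have hcast1 : ((t * t - t : ℕ) : ℝ) = (t : ℝ) * t - t := by
      push_cast [Nat.cast_sub htt]; ring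
    have hcast2 : ((2 * (N * N) : ℕ) : ℝ) = 2 * (N : ℝ) ^ 2 := by push_cast; ring
    rw [hcast1, hcast2] at hlog
    nlinarith [hlog]
  set tR := ((p.map (Int.castRingHom ℝ)).roots.filter (fun x => a ≤ x ∧ x ≤ a + ζ)).card
    with htRdef
  rcases le_or_gt ((tR : ℝ)) 1 with hsmall | hbig
  · refine le_trans (div_nonpos_of_nonpos_of_nonneg (by linarith) (by positivity))
      (Real.sqrt_nonneg _)
  · have hnpos : (0:ℝ) < (p.natDegree : ℝ) := by rw [hn']; exact_mod_cast hNpos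
    rw [Real.le_sqrt (div_nonneg (by linarith) hnpos.le) (div_nonneg (by linarith) hl.le)]
    rw [div_pow, hn', div_le_div_iff₀ (by positivity) hl]
    have hTx : (tR : ℝ) ≤ (t : ℝ) := htR
    have h1' : ((tR : ℝ) - 1) ^ 2 ≤ (t : ℝ) * (t : ℝ) - (t : ℝ) := by nlinarith
    have h2' := mul_le_mul_of_nonneg_right h1' hl.le
    nlinarith [h2', hlogkey]


/-- The quantity `Υ_{κ,ζ}`: the supremum over monic irreducible integer polynomials `p`
with all roots in `[-κ,κ]` and closed intervals `I ⊆ [-κ,κ]` of length `ζ` of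
`(#{roots of p in I} - 1)/deg p`. -/
noncomputable def Upsilon (κ ζ : ℝ) : ℝ :=
  sSup {r : ℝ | ∃ (p : Polynomial ℤ) (a : ℝ), p.Monic ∧ Irreducible p ∧
    -κ ≤ a ∧ a + ζ ≤ κ ∧
    (∀ z ∈ (p.map (Int.castRingHom ℂ)).roots, z.im = 0 ∧ -κ ≤ z.re ∧ z.re ≤ κ) ∧
    r = ((((p.map (Int.castRingHom ℝ)).roots.filter
          (fun x => a ≤ x ∧ x ≤ a + ζ)).card : ℝ) - 1) / (p.natDegree : ℝ)}

theorem stmt_14 (κ : ℝ) (hκ : 2 ≤ κ) :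
    Filter.Tendsto (fun ζ => Upsilon κ ζ) (nhdsWithin 0 (Set.Ioi 0)) (nhds 0) := by
  have hbound : ∀ ζ : ℝ, 0 < ζ → ζ < 1 →
      0 ≤ Upsilon κ ζ ∧ Upsilon κ ζ ≤ Real.sqrt (2 * Real.log (2 * κ) / Real.log ζ⁻¹) := by
    intro ζ hζ0 hζ1
    have hub : ∀ r ∈ {r : ℝ | ∃ (p : Polynomial ℤ) (a : ℝ), p.Monic ∧ Irreducible p ∧
        -κ ≤ a ∧ a + ζ ≤ κ ∧
        (∀ z ∈ (p.map (Int.castRingHom ℂ)).roots, z.im = 0 ∧ -κ ≤ z.re ∧ z.re ≤ κ) ∧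
        r = ((((p.map (Int.castRingHom ℝ)).roots.filter
              (fun x => a ≤ x ∧ x ≤ a + ζ)).card : ℝ) - 1) / (p.natDegree : ℝ)},
        r ≤ Real.sqrt (2 * Real.log (2 * κ) / Real.log ζ⁻¹) := by
      rintro r ⟨p, a, hm, hirr, _, _, hroots, rfl⟩
      exact key_bound κ ζ hκ hζ0 hζ1 p hm hirr a hroots
    have hmem : (0:ℝ) ∈ {r : ℝ | ∃ (p : Polynomial ℤ) (a : ℝ), p.Monic ∧ Irreducible p ∧
        -κ ≤ a ∧ a + ζ ≤ κ ∧
        (∀ z ∈ (p.map (Int.castRingHom ℂ)).roots, z.im = 0 ∧ -κ ≤ z.re ∧ z.re ≤ κ) ∧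
        r = ((((p.map (Int.castRingHom ℝ)).roots.filter
              (fun x => a ≤ x ∧ x ≤ a + ζ)).card : ℝ) - 1) / (p.natDegree : ℝ)} := by
      refine ⟨X, 0, monic_X, Polynomial.irreducible_X, by linarith, by linarith, ?_, ?_⟩
      · intro z hz
        rw [Polynomial.map_X, Polynomial.roots_X, Multiset.mem_singleton] at hz
        subst hz
        refine ⟨by simp, by simp; linarith, by simp; linarith⟩
      · rw [Polynomial.map_X, Polynomial.roots_X, Polynomial.natDegree_X]
        rw [show Multiset.filter (fun x => 0 ≤ x ∧ x ≤ 0 + ζ) {(0:ℝ)} = {(0:ℝ)} from by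
          rw [Multiset.filter_singleton, if_pos ⟨le_refl _, by linarith⟩]]
        norm_num
    constructor
    · exact le_csSup ⟨_, hub⟩ hmem
    · exact Real.sSup_le hub (Real.sqrt_nonneg _)
  have hg : Filter.Tendsto (fun ζ : ℝ => Real.sqrt (2 * Real.log (2 * κ) / Real.log ζ⁻¹))
      (nhdsWithin 0 (Set.Ioi 0)) (nhds 0) := by
    have h1 : Filter.Tendsto (fun ζ : ℝ => ζ⁻¹) (nhdsWithin 0 (Set.Ioi 0)) Filter.atTop :=
      tendsto_inv_nhdsGT_zero
    have h2 : Filter.Tendsto (fun ζ : ℝ => Real.log ζ⁻¹) (nhdsWithin 0 (Set.Ioi 0))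
        Filter.atTop := Real.tendsto_log_atTop.comp h1
    have h3 : Filter.Tendsto (fun ζ : ℝ => 2 * Real.log (2 * κ) / Real.log ζ⁻¹)
        (nhdsWithin 0 (Set.Ioi 0)) (nhds 0) := Filter.Tendsto.div_atTop tendsto_const_nhds h2
    have h4 : Filter.Tendsto Real.sqrt (nhds 0) (nhds 0) := by
      have := Real.continuous_sqrt.tendsto 0
      simpa using this
    exact h4.comp h3
  refine tendsto_of_tendsto_of_tendsto_of_le_of_le' tendsto_const_nhds hg ?_ ?_
  · filter_upwards [Ioo_mem_nhdsGT_of_mem (Set.mem_Ico.mpr ⟨le_refl (0:ℝ), one_pos⟩)] with ζ hζ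
    exact (hbound ζ hζ.1 hζ.2).1
  · filter_upwards [Ioo_mem_nhdsGT_of_mem (Set.mem_Ico.mpr ⟨le_refl (0:ℝ), one_pos⟩)] with ζ hζ
    exact (hbound ζ hζ.1 hζ.2).2
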